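/- Let (H, μ) be a probability space with projections π_L, π_R : H → H whose joint pushforward is μ × μ, and let p₁, ..., pₙ be a non-duplicating sequence of paths (compositions of projections, no path a suffix of another). Then for every measurable g : Hⁿ → [0,∞], ∫ g(p₁(σ), ..., pₙ(σ)) dμ(σ) = ∫ ⋯ ∫ g(σ₁, ..., σₙ) dμ(σ₁) ⋯ dμ(σₙ). That is, the random variables p₁, ..., pₙ are i.i.d. with law μ. -/

import Mathlib

open MeasureTheory

namespace PathsIID

variable {H : Type*}

/-- A path is a list of directions (`true` = L, `false` = R), interpreted as a
composition of projections: `[d₁, …, dₙ](σ) = (π_{d₁} ∘ ⋯ ∘ π_{dₙ})(σ)`. -/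
def pathEval (πL πR : H → H) : List Bool → H → H
  | [], σ => σ
  | d :: p, σ => (if d then πL else πR) (pathEval πL πR p σ)

lemma pathEval_append (πL πR : H → H) (a b : List Bool) (σ : H) :
    pathEval πL πR (a ++ b) σ = pathEval πL πR a (pathEval πL πR b σ) := by
  induction a with
  | nil => rfl
  | cons d t ih => simp [pathEval, ih]

lemma measurable_pathEval [MeasurableSpace H] {πL πR : H → H} (hπL : Measurable πL)
    (hπR : Measurable πR) (l : List Bool) : Measurable (pathEval πL πR l) := by
  induction l with
  | nil => exact measurable_id
  | cons d t ih =>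
    cases d
    · simpa [pathEval, Function.comp_def] using hπR.comp ih
    · simpa [pathEval, Function.comp_def] using hπL.comp ih

lemma aux [MeasurableSpace H] (μ : Measure H) [IsProbabilityMeasure μ]
    (πL πR : H → H) (hπL : Measurable πL) (hπR : Measurable πR)
    (hsplit : ∀ g : H × H → ENNReal, Measurable g →
      ∫⁻ σ, g (πL σ, πR σ) ∂μ = ∫⁻ σ₁, ∫⁻ σ₂, g (σ₁, σ₂) ∂μ ∂μ) :
    ∀ (N : ℕ) (ι : Type) [Fintype ι] (p : ι → List Bool),
      (∑ i, (p i).length) ≤ N →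
      (∀ i j : ι, i ≠ j → ¬ (p i <:+ p j)) →
      ∀ g : (ι → H) → ENNReal, Measurable g →
        ∫⁻ σ, g (fun i => pathEval πL πR (p i) σ) ∂μ
          = ∫⁻ x, g x ∂(Measure.pi fun _ : ι => μ) := by
  intro N
  induction N using Nat.strong_induction_on with
  | _ N ih =>
  intro ι instF p hsum hnd g hg
  rcases isEmpty_or_nonempty ι with hι | hι
  · -- empty index type: both sides are constants
    have hconst : ∀ x : ι → H, g x = g default := fun x =>
      congrArg g (Subsingleton.elim _ _)
    rw [lintegral_congr fun σ => hconst _, lintegral_const, measure_univ, mul_one,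
      lintegral_congr fun x => hconst _, lintegral_const, measure_univ, mul_one]
  · by_cases hne : ∃ i0 : ι, p i0 = []
    · -- some path is empty: then ι has a unique element
      obtain ⟨i0, hi0⟩ := hne
      haveI : Unique ι :=
        { default := i0
          uniq := fun j => by
            by_contra hj
            refine hnd i0 j (fun h => hj h.symm) ?_
            rw [hi0]
            exact List.nil_suffix
            }
      have hpall : ∀ i : ι, p i = [] := fun i => by
        rw [show i = i0 from Subsingleton.elim i i0]; exact hi0
      have h1 : (fun σ : H => g fun i => pathEval πL πR (p i) σ)
          = fun σ => g ((MeasurableEquiv.funUnique ι H).symm σ) := by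
        funext σ
        congr 1
        funext i
        rw [hpall i]
        rfl
      rw [h1, ((measurePreserving_funUnique μ ι).symm
        (MeasurableEquiv.funUnique ι H)).lintegral_comp hg]
      congr!
    · push_neg at hne
      -- all paths nonempty; split off the first projection applied
      set q : ι → List Bool := fun i => (p i).dropLast with hq
      set d : ι → Bool := fun i => (p i).getLast (hne i) with hd
      have hpq : ∀ i, p i = q i ++ [d i] := fun i =>
        (List.dropLast_append_getLast (hne i)).symm
      have heval : ∀ (i : ι) (σ : H),
          pathEval πL πR (p i) σ
            = pathEval πL πR (q i) (if d i then πL σ else πR σ) := by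
        intro i σ
        conv_lhs => rw [hpq i]
        rw [pathEval_append]
        cases hdi : d i <;> simp [pathEval, hdi]
      set P : ι → Prop := fun i => d i = true with hP
      letI : DecidablePred P := fun i => instDecidableEqBool (d i) true
      set e := MeasurableEquiv.piEquivPiSubtypeProd (fun _ : ι => H) P with he
      -- the key pointwise identity
      have hkey : ∀ a b : H,
          (fun i => pathEval πL πR (q i) (if d i then a else b))
            = e.symm (fun i : Subtype P => pathEval πL πR (q i.1) a,
                      fun i : {i // ¬ P i} => pathEval πL πR (q i.1) b) := by
        intro a b
        funext i
        have hs : ∀ (x : Subtype P → H) (y : {i // ¬ P i} → H),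
            e.symm (x, y) i = if h : P i then x ⟨i, h⟩ else y ⟨i, h⟩ :=
          fun _ _ => rfl
        rw [hs]
        by_cases hPi : P i
        · rw [dif_pos hPi, if_pos (show d i = true from hPi)]
        · rw [dif_neg hPi, if_neg (show ¬ d i = true from hPi)]
      -- measurability facts
      have hmq : ∀ i : ι, Measurable (pathEval πL πR (q i)) :=
        fun i => measurable_pathEval hπL hπR _
      have hG : Measurable fun x : H × H =>
          g (fun i => pathEval πL πR (q i) (if d i then x.1 else x.2)) := by
        apply hg.comp
        apply measurable_pi_lambda
        intro i
        by_cases hdi : d i = true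
        · simpa [hdi, Function.comp_def] using (hmq i).comp measurable_fst
        · simpa [hdi, Function.comp_def] using (hmq i).comp measurable_snd
      -- step 1: rewrite LHS and apply hsplit
      have step1 : ∫⁻ σ, g (fun i => pathEval πL πR (p i) σ) ∂μ
          = ∫⁻ a, ∫⁻ b,
              g (fun i => pathEval πL πR (q i) (if d i then a else b)) ∂μ ∂μ := by
        rw [← hsplit _ hG]
        refine lintegral_congr fun σ => ?_
        congr 1
        funext i
        exact heval i σ
      -- nonduplication passes to the two subfamilies
      have hndq : ∀ (c : Bool) (i j : ι), d i = c → d j = c → i ≠ j →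
          ¬ ((fun i => q i) i <:+ (fun i => q i) j) := by
        intro c i j hi hj hij hsuf
        apply hnd i j hij
        obtain ⟨r, hr⟩ := hsuf
        refine ⟨r, ?_⟩
        rw [hpq i, hpq j, hi, hj, ← List.append_assoc, hr]
      -- length bookkeeping
      have hcard : 1 ≤ Fintype.card ι := Fintype.card_pos
      have hlen : ∀ i, (p i).length = (q i).length + 1 := by
        intro i; rw [hpq i]; simp
      have hsum' : (∑ i, (q i).length) + Fintype.card ι ≤ N := by
        have : (∑ i, (p i).length) = (∑ i, (q i).length) + Fintype.card ι := by
          rw [Finset.sum_congr rfl fun i _ => hlen i, Finset.sum_add_distrib]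
          simp [Finset.card_univ]
        omega
      have hNpos : 1 ≤ N := le_trans hcard (le_trans (Nat.le_add_left _ _) hsum')
      have hlt : N - 1 < N := by omega
      have hsubL : (∑ i : Subtype P, (q i.1).length) ≤ N - 1 := by
        have h1 : (∑ a ∈ Finset.univ.filter P, (q a).length)
            = ∑ i : Subtype P, (q i.1).length :=
          Finset.sum_subtype _ (by simp [P]) _
        have h2 : (∑ a ∈ Finset.univ.filter P, (q a).length)
            ≤ ∑ i, (q i).length :=
          Finset.sum_le_sum_of_subset (Finset.filter_subset _ _)
        omega
      have hsubR : (∑ i : {i // ¬ P i}, (q i.1).length) ≤ N - 1 := by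
        have h1 : (∑ a ∈ Finset.univ.filter (fun i => ¬ P i), (q a).length)
            = ∑ i : {i // ¬ P i}, (q i.1).length :=
          Finset.sum_subtype _ (by simp) _
        have h2 : (∑ a ∈ Finset.univ.filter (fun i => ¬ P i), (q a).length)
            ≤ ∑ i, (q i).length :=
          Finset.sum_le_sum_of_subset (Finset.filter_subset _ _)
        omega
      -- apply the induction hypothesis to the two subfamilies
      have ihL := ih (N - 1) hlt (Subtype P) (fun i : Subtype P => q i.1)
        hsubL
        (fun i j hij => hndq true i.1 j.1 i.2 j.2 (fun h => hij (Subtype.ext h)))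
      have ihR := ih (N - 1) hlt {i // ¬ P i} (fun i : {i // ¬ P i} => q i.1)
        hsubR
        (fun i j hij => by
          refine hndq false i.1 j.1 ?_ ?_ (fun h => hij (Subtype.ext h))
          · exact Bool.eq_false_iff.mpr i.2
          · exact Bool.eq_false_iff.mpr j.2)
      have hgesymm : Measurable fun z : (Subtype P → H) × ({i // ¬ P i} → H) =>
          g (e.symm z) := hg.comp e.symm.measurable
      -- inner integral, for each fixed a
      have step2 : ∀ a : H,
          ∫⁻ b, g (fun i => pathEval πL πR (q i) (if d i then a else b)) ∂μ
            = ∫⁻ y, g (e.symm (fun i : Subtype P => pathEval πL πR (q i.1) a, y))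
                ∂(Measure.pi fun _ : {i // ¬ P i} => μ) := by
        intro a
        have := ihR (fun y => g (e.symm
            (fun i : Subtype P => pathEval πL πR (q i.1) a, y)))
          (hgesymm.comp measurable_prodMk_left)
        rw [← this]
        refine lintegral_congr fun b => ?_
        rw [hkey a b]
      -- outer integral
      have hgL : Measurable fun x : Subtype P → H =>
          ∫⁻ y, g (e.symm (x, y)) ∂(Measure.pi fun _ : {i // ¬ P i} => μ) :=
        Measurable.lintegral_prod_right' hgesymm
      have step3 : ∫⁻ a, ∫⁻ y,
            g (e.symm (fun i : Subtype P => pathEval πL πR (q i.1) a, y))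
              ∂(Measure.pi fun _ : {i // ¬ P i} => μ) ∂μ
          = ∫⁻ x, ∫⁻ y, g (e.symm (x, y))
              ∂(Measure.pi fun _ : {i // ¬ P i} => μ)
              ∂(Measure.pi fun _ : Subtype P => μ) :=
        ihL _ hgL
      -- combine
      rw [step1]
      rw [lintegral_congr step2, step3]
      rw [← lintegral_prod _ hgesymm.aemeasurable]
      exact ((measurePreserving_piEquivPiSubtypeProd (fun _ : ι => μ) P).symm e).lintegral_comp hg

theorem nonduplicating_paths_iid
    [MeasurableSpace H] (μ : Measure H) [IsProbabilityMeasure μ]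
    (πL πR : H → H) (hπL : Measurable πL) (hπR : Measurable πR)
    (hsplit : ∀ g : H × H → ENNReal, Measurable g →
      ∫⁻ σ, g (πL σ, πR σ) ∂μ = ∫⁻ σ₁, ∫⁻ σ₂, g (σ₁, σ₂) ∂μ ∂μ)
    (n : ℕ) (p : Fin n → List Bool)
    (hnd : ∀ i j : Fin n, i ≠ j → ¬ (p i <:+ p j)) :
    ∀ g : (Fin n → H) → ENNReal, Measurable g →
      ∫⁻ σ, g (fun i => pathEval πL πR (p i) σ) ∂μ
        = ∫⁻ x, g x ∂(Measure.pi fun _ : Fin n => μ) := by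
  exact aux μ πL πR hπL hπR hsplit (∑ i, (p i).length) (Fin n) p le_rfl hnd

end PathsIID
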